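/- arXiv:1706.08969 — 2 statements merged into one kernel-verified Lean document; each statement's English description precedes it below -/
import Mathlib

section
/- For the piecewise interaction potential u defined with parameters F_r, F_a > 0, 0 < d_r < d_a and s ∈ (0,2], s ≠ 1, one has ∫₀^∞ u(r)·r dr = F_r·d_r³·(11s+6)/(192 s) − (F_a/30)·(d_a − d_r)·(3 d_a² + 4 d_a d_r + 3 d_r²). -/
open Real MeasureTheory Set

lemma poly_deriv (a b c d e x : ℝ) :
    HasDerivAt (fun x : ℝ => a*x^5 + b*x^4 + c*x^3 + d*x^2 + e*x)
      (5*a*x^4 + 4*b*x^3 + 3*c*x^2 + 2*d*x + e) x := by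
  have h :=
    (((hasDerivAt_pow 5 x).const_mul a).add (((hasDerivAt_pow 4 x).const_mul b).add
      (((hasDerivAt_pow 3 x).const_mul c).add (((hasDerivAt_pow 2 x).const_mul d).add
        ((hasDerivAt_id x).const_mul e)))))
  refine (h.congr_deriv (by push_cast; ring)).congr_of_eventuallyEq
    (Filter.Eventually.of_forall fun y => ?_)
  simp only [Pi.add_apply, id_eq]; ring

set_option maxHeartbeats 1600000 in
theorem stmt0 (dr da Fr Fa s : ℝ) (hdr : 0 < dr) (hdra : dr < da)
    (hFr : 0 < Fr) (hFa : 0 < Fa) (hs0 : 0 < s) (hs2 : s ≤ 2) (hs1 : s ≠ 1)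
    (u : ℝ → ℝ)
    (h1 : ∀ r : ℝ, 0 < r → r ≤ dr / 2 →
      u r = -(Fr / (2 * (s - 1))) * (dr / 2) ^ (3 - 2 * s) * r ^ (2 * s - 2)
            + Fr * dr * s / (4 * (s - 1)) - (2 / 3) * Fa * (da - dr))
    (h2 : ∀ r : ℝ, dr / 2 < r → r ≤ dr →
      u r = Fr * r ^ 2 / dr - 2 * Fr * r + Fr * dr - (2 / 3) * Fa * (da - dr))
    (h3 : ∀ r : ℝ, dr < r → r ≤ da →
      u r = -(2 * Fa / (3 * (da - dr) ^ 2)) *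
            (2 * r ^ 3 - 3 * (da + dr) * r ^ 2 + 6 * da * dr * r - da ^ 2 * (3 * dr - da)))
    (h4 : ∀ r : ℝ, da < r → u r = 0) :
    ∫ r in Ioi (0 : ℝ), u r * r
      = Fr * dr ^ 3 * (11 * s + 6) / (192 * s)
        - (Fa / 30) * (da - dr) * (3 * da ^ 2 + 4 * da * dr + 3 * dr ^ 2) := by
  have hd2 : (0:ℝ) < dr / 2 := by linarith
  have hd2r : dr / 2 ≤ dr := by linarith
  have hda0 : (0:ℝ) ≤ da := by linarith
  have hs : s ≠ 0 := ne_of_gt hs0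
  have hsm1 : s - 1 ≠ 0 := sub_ne_zero.mpr hs1
  have hdr0 : dr ≠ 0 := ne_of_gt hdr
  have hdd : da - dr ≠ 0 := sub_ne_zero.mpr (ne_of_gt hdra)
  set A : ℝ := -(Fr / (2 * (s - 1))) * (dr / 2) ^ (3 - 2 * s) with hA
  set C : ℝ := Fr * dr * s / (4 * (s - 1)) - (2 / 3) * Fa * (da - dr) with hC
  set K : ℝ := -(2 * Fa / (3 * (da - dr) ^ 2)) with hK
  set g1 : ℝ → ℝ := fun r => A * r ^ (2 * s - 1) + C * r with hg1
  set g2 : ℝ → ℝ := fun r =>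
    (Fr * r ^ 2 / dr - 2 * Fr * r + Fr * dr - (2 / 3) * Fa * (da - dr)) * r with hg2
  set g3 : ℝ → ℝ := fun r =>
    (K * (2 * r ^ 3 - 3 * (da + dr) * r ^ 2 + 6 * da * dr * r - da ^ 2 * (3 * dr - da))) * r
    with hg3
  -- pointwise agreement on the pieces
  have hEq1 : EqOn (fun r => u r * r) g1 (Ioc 0 (dr / 2)) := by
    intro x hx
    have hx0 : (0:ℝ) < x := hx.1
    have key : x ^ (2 * s - 1) = x ^ (2 * s - 2) * x := by
      rw [show (2 * s - 1) = (2 * s - 2) + 1 by ring, Real.rpow_add hx0, Real.rpow_one]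
    simp only [hg1, key, h1 x hx.1 hx.2]
    ring
  have hEq2 : EqOn (fun r => u r * r) g2 (Ioc (dr / 2) dr) := by
    intro x hx
    simp only [hg2, h2 x hx.1 hx.2]
  have hEq3 : EqOn (fun r => u r * r) g3 (Ioc dr da) := by
    intro x hx
    simp only [hg3, h3 x hx.1 hx.2]
  -- integrability of the explicit pieces
  have hg1I : IntervalIntegrable g1 volume 0 (dr / 2) := by
    apply IntervalIntegrable.add
    · exact (intervalIntegral.intervalIntegrable_rpow' (by linarith)).const_mul A
    · exact (continuous_const.mul continuous_id).intervalIntegrable _ _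
  have hg2c : Continuous g2 := by fun_prop
  have hg3c : Continuous g3 := by fun_prop
  have hI1 : IntegrableOn (fun r => u r * r) (Ioc 0 (dr / 2)) :=
    (integrableOn_congr_fun hEq1 measurableSet_Ioc).mpr
      ((intervalIntegrable_iff_integrableOn_Ioc_of_le (le_of_lt hd2)).mp hg1I)
  have hI2 : IntegrableOn (fun r => u r * r) (Ioc (dr / 2) dr) :=
    (integrableOn_congr_fun hEq2 measurableSet_Ioc).mpr (hg2c.integrableOn_Ioc)
  have hI3 : IntegrableOn (fun r => u r * r) (Ioc dr da) :=
    (integrableOn_congr_fun hEq3 measurableSet_Ioc).mpr (hg3c.integrableOn_Ioc)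
  -- interval integrability of u * r
  have hu1 : IntervalIntegrable (fun r => u r * r) volume 0 (dr / 2) :=
    (intervalIntegrable_iff_integrableOn_Ioc_of_le (le_of_lt hd2)).mpr hI1
  have hu2 : IntervalIntegrable (fun r => u r * r) volume (dr / 2) dr :=
    (intervalIntegrable_iff_integrableOn_Ioc_of_le hd2r).mpr hI2
  have hu3 : IntervalIntegrable (fun r => u r * r) volume dr da :=
    (intervalIntegrable_iff_integrableOn_Ioc_of_le (le_of_lt hdra)).mpr hI3
  -- the tail vanishes
  have hz : EqOn (fun r => u r * r) (fun _ => (0:ℝ)) (Ioi da) := fun x hx => by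
    simp [h4 x hx]
  have hIoi0 : IntegrableOn (fun r => u r * r) (Ioi da) :=
    (integrableOn_congr_fun hz measurableSet_Ioi).mpr (integrableOn_zero)
  have hIoc : IntegrableOn (fun r => u r * r) (Ioc 0 da) := by
    rw [← Ioc_union_Ioc_eq_Ioc (le_of_lt hd2) (hd2r.trans (le_of_lt hdra)),
        ← Ioc_union_Ioc_eq_Ioc hd2r (le_of_lt hdra)]
    exact hI1.union (hI2.union hI3)
  have step1 : ∫ r in Ioi (0:ℝ), u r * r = ∫ r in Ioc (0:ℝ) da, u r * r := by
    rw [← Ioc_union_Ioi_eq_Ioi hda0,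
      setIntegral_union (Ioc_disjoint_Ioi le_rfl) measurableSet_Ioi hIoc hIoi0]
    rw [setIntegral_congr_fun measurableSet_Ioi hz, integral_zero, add_zero]
  -- congruence on each interval integral
  have e1 : ∫ r in (0:ℝ)..(dr/2), u r * r = ∫ r in (0:ℝ)..(dr/2), g1 r := by
    refine intervalIntegral.integral_congr_ae (Filter.Eventually.of_forall fun x hx => ?_)
    rw [uIoc_of_le (le_of_lt hd2)] at hx
    exact hEq1 hx
  have e2 : ∫ r in (dr/2)..dr, u r * r = ∫ r in (dr/2)..dr, g2 r := by
    refine intervalIntegral.integral_congr_ae (Filter.Eventually.of_forall fun x hx => ?_)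
    rw [uIoc_of_le hd2r] at hx
    exact hEq2 hx
  have e3 : ∫ r in dr..da, u r * r = ∫ r in dr..da, g3 r := by
    refine intervalIntegral.integral_congr_ae (Filter.Eventually.of_forall fun x hx => ?_)
    rw [uIoc_of_le (le_of_lt hdra)] at hx
    exact hEq3 hx
  -- value of the first integral
  have h2s : 2 * s - 1 + 1 = 2 * s := by ring
  have hcol : (dr/2:ℝ) ^ (3 - 2*s) * (dr/2) ^ (2*s) = (dr/2) ^ (3:ℕ) := by
    rw [← Real.rpow_natCast (dr/2) 3, ← Real.rpow_add hd2]
    norm_num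
  have e1v : ∫ r in (0:ℝ)..(dr/2), g1 r
      = -(Fr / (2 * (s - 1))) * (dr/2) ^ (3:ℕ) / (2*s) + C * ((dr/2)^2 / 2) := by
    simp only [hg1]
    rw [intervalIntegral.integral_add
        ((intervalIntegral.intervalIntegrable_rpow' (r := 2*s-1) (by linarith)).const_mul A)
        (Continuous.intervalIntegrable (by continuity : Continuous fun x : ℝ => C * x) _ _),
      intervalIntegral.integral_const_mul, intervalIntegral.integral_const_mul,
      integral_rpow (Or.inl (by linarith : (-1:ℝ) < 2*s-1)), integral_id, h2s,
      Real.zero_rpow (by positivity : 2*s ≠ 0), hA]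
    rw [sub_zero]
    linear_combination (-(Fr / (2*(s-1))) / (2*s)) * hcol
  have e2v : ∫ r in (dr/2)..dr, g2 r
      = ((Fr/(4*dr))*dr^4 + (-(2/3)*Fr)*dr^3 + ((Fr*dr - (2/3)*Fa*(da-dr))/2)*dr^2)
      - ((Fr/(4*dr))*(dr/2)^4 + (-(2/3)*Fr)*(dr/2)^3
          + ((Fr*dr - (2/3)*Fa*(da-dr))/2)*(dr/2)^2) := by
    have h := intervalIntegral.integral_eq_sub_of_hasDerivAt (a := dr/2) (b := dr)
      (f := fun x : ℝ => 0*x^5 + (Fr/(4*dr))*x^4 + (-(2/3)*Fr)*x^3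
        + ((Fr*dr - (2/3)*Fa*(da-dr))/2)*x^2 + 0*x)
      (f' := g2)
      (fun x _ => by
        have hp := poly_deriv 0 (Fr/(4*dr)) (-(2/3)*Fr) ((Fr*dr - (2/3)*Fa*(da-dr))/2) 0 x
        refine hp.congr_deriv ?_
        simp only [hg2]
        field_simp
        ring)
      (hg2c.intervalIntegrable _ _)
    rw [h]; ring
  have e3v : ∫ r in dr..da, g3 r
      = ((2*K/5)*da^5 + (-(3*K*(da+dr))/4)*da^4 + (2*K*da*dr)*da^3
          + (-(K*da^2*(3*dr-da))/2)*da^2)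
      - ((2*K/5)*dr^5 + (-(3*K*(da+dr))/4)*dr^4 + (2*K*da*dr)*dr^3
          + (-(K*da^2*(3*dr-da))/2)*dr^2) := by
    have h := intervalIntegral.integral_eq_sub_of_hasDerivAt (a := dr) (b := da)
      (f := fun x : ℝ => (2*K/5)*x^5 + (-(3*K*(da+dr))/4)*x^4 + (2*K*da*dr)*x^3
        + (-(K*da^2*(3*dr-da))/2)*x^2 + 0*x)
      (f' := g3)
      (fun x _ => by
        have hp := poly_deriv (2*K/5) (-(3*K*(da+dr))/4) (2*K*da*dr) (-(K*da^2*(3*dr-da))/2) 0 x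
        refine hp.congr_deriv ?_
        simp only [hg3]
        ring)
      (hg3c.intervalIntegrable _ _)
    rw [h]; ring
  rw [step1, ← intervalIntegral.integral_of_le hda0,
    ← intervalIntegral.integral_add_adjacent_intervals hu1 (hu2.trans hu3),
    ← intervalIntegral.integral_add_adjacent_intervals hu2 hu3,
    e1, e1v, e2, e2v, e3, e3v, hC, hK]
  field_simp
  ring
end

section
/- For the hyperbolic-case potential u (the s = 1 case), ∫₀^∞ u(r)·r dr = F_r·d_r³·17/192 − (F_a/30)·(d_a − d_r)·(3 d_a² + 4 d_a d_r + 3 d_r²); consequently this integral is positive if and only if F_r/F_a > 32 (d_a − d_r)(3 d_a² + 4 d_a d_r + 3 d_r²)/(85 d_r³). -/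
open Real MeasureTheory Set

lemma aux_log (A B b : ℝ) (hb : 0 < b) :
    ∫ r in (0:ℝ)..b, (A * Real.log r + B) * r
      = A * (b ^ 2 / 2 * Real.log b - b ^ 2 / 4) + B * (b ^ 2 / 2) := by
  set F : ℝ → ℝ := fun r => A * (r * (r * Real.log r) / 2 - r ^ 2 / 4) + B * (r ^ 2 / 2) with hF
  have hderiv : ∀ x ∈ Ioo (0:ℝ) b, HasDerivWithinAt F ((A * Real.log x + B) * x) (Ioi x) x := by
    intro x hx
    have hx0 : x ≠ 0 := ne_of_gt hx.1
    have h1 : HasDerivAt (fun r : ℝ => r * Real.log r) (Real.log x + 1) x := by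
      have := (hasDerivAt_id' x).fun_mul (Real.hasDerivAt_log hx0)
      simpa [mul_inv_cancel₀ hx0] using this
    have h2 : HasDerivAt (fun r : ℝ => r * (r * Real.log r)) (1 * (x * Real.log x) + x * (Real.log x + 1)) x :=
      (hasDerivAt_id x).mul h1
    have hp : HasDerivAt (fun r : ℝ => r ^ 2) (2 * x) x := by
      simpa using hasDerivAt_pow 2 x
    have h3 := (((h2.div_const 2).sub (hp.div_const 4)).const_mul A).add ((hp.div_const 2).const_mul B)
    have he : (A * Real.log x + B) * x
        = A * ((1 * (x * Real.log x) + x * (Real.log x + 1)) / 2 - 2 * x / 4) + B * (2 * x / 2) := by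
      ring
    rw [he]
    exact h3.hasDerivWithinAt
  have hcont : ContinuousOn F (Icc 0 b) := by
    apply Continuous.continuousOn
    exact (continuous_const.mul (((continuous_id.mul Real.continuous_mul_log).div_const 2).sub
      ((continuous_pow 2).div_const 4))).add (continuous_const.mul ((continuous_pow 2).div_const 2))
  have hint : IntervalIntegrable (fun r => (A * Real.log r + B) * r) volume 0 b := by
    have hc : Continuous fun r : ℝ => (A * Real.log r + B) * r := by
      have he : (fun r : ℝ => (A * Real.log r + B) * r) = fun r => A * (r * Real.log r) + B * r := by
        funext r; ring
      rw [he]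
      exact (continuous_const.mul Real.continuous_mul_log).add (continuous_const.mul continuous_id)
    exact hc.intervalIntegrable 0 b
  have := intervalIntegral.integral_eq_sub_of_hasDeriv_right_of_le hb.le hcont hderiv hint
  rw [this, hF]
  ring

lemma aux_poly5 (c5 c4 c3 c2 : ℝ) (x : ℝ) :
    HasDerivAt (fun r : ℝ => c5 * r ^ 5 + c4 * r ^ 4 + c3 * r ^ 3 + c2 * r ^ 2)
      (5 * c5 * x ^ 4 + 4 * c4 * x ^ 3 + 3 * c3 * x ^ 2 + 2 * c2 * x) x := by
  have h5 := (hasDerivAt_pow 5 x).const_mul c5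
  have h4 := (hasDerivAt_pow 4 x).const_mul c4
  have h3 := (hasDerivAt_pow 3 x).const_mul c3
  have h2 := (hasDerivAt_pow 2 x).const_mul c2
  have := ((h5.fun_add h4).fun_add h3).fun_add h2
  refine this.congr_deriv ?_
  push_cast
  ring

lemma Ioc_disj (a b c : ℝ) : Disjoint (Ioc a b) (Ioc b c) := by
  rw [Set.disjoint_left]
  intro x h1 h2
  exact absurd h2.1 (not_lt.2 h1.2)

set_option maxHeartbeats 1000000 in
theorem stmt4 (dr da Fr Fa : ℝ) (hdr : 0 < dr) (hdra : dr < da)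
    (hFr : 0 < Fr) (hFa : 0 < Fa)
    (u : ℝ → ℝ)
    (h1 : ∀ r : ℝ, 0 < r → r ≤ dr / 2 →
      u r = -(Fr * dr / 2) * Real.log r
            + (Fr * dr / 2) * (1 / 2 + Real.log (dr / 2)) - (2 / 3) * Fa * (da - dr))
    (h2 : ∀ r : ℝ, dr / 2 < r → r ≤ dr →
      u r = Fr * r ^ 2 / dr - 2 * Fr * r + Fr * dr - (2 / 3) * Fa * (da - dr))
    (h3 : ∀ r : ℝ, dr < r → r ≤ da →
      u r = -(2 * Fa / (3 * (da - dr) ^ 2)) *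
            (2 * r ^ 3 - 3 * (da + dr) * r ^ 2 + 6 * da * dr * r - da ^ 2 * (3 * dr - da)))
    (h4 : ∀ r : ℝ, da < r → u r = 0) :
    (∫ r in Ioi (0 : ℝ), u r * r
      = Fr * dr ^ 3 * 17 / 192
        - (Fa / 30) * (da - dr) * (3 * da ^ 2 + 4 * da * dr + 3 * dr ^ 2)) ∧
    ((0 < ∫ r in Ioi (0 : ℝ), u r * r) ↔
      Fr / Fa > 32 * (da - dr) * (3 * da ^ 2 + 4 * da * dr + 3 * dr ^ 2) / (85 * dr ^ 3)) := by
  have hdr2 : (0:ℝ) < dr / 2 := by linarith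
  have hda : 0 < da := lt_trans hdr hdra
  have hdrne : dr ≠ 0 := hdr.ne'
  have hsub : da - dr ≠ 0 := sub_ne_zero.mpr hdra.ne'
  -- the three explicit pieces
  set g1 : ℝ → ℝ := fun r =>
    (-(Fr * dr / 2) * Real.log r + (Fr * dr / 2) * (1 / 2 + Real.log (dr / 2))
      - (2 / 3) * Fa * (da - dr)) * r with hg1def
  set g2 : ℝ → ℝ := fun r =>
    (Fr * r ^ 2 / dr - 2 * Fr * r + Fr * dr - (2 / 3) * Fa * (da - dr)) * r with hg2def
  set g3 : ℝ → ℝ := fun r =>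
    (-(2 * Fa / (3 * (da - dr) ^ 2)) *
      (2 * r ^ 3 - 3 * (da + dr) * r ^ 2 + 6 * da * dr * r - da ^ 2 * (3 * dr - da))) * r with hg3def
  have hg1eq : EqOn (fun r => u r * r) g1 (Ioc 0 (dr / 2)) := by
    intro r hr; simp only [hg1def]; rw [h1 r hr.1 hr.2]
  have hg2eq : EqOn (fun r => u r * r) g2 (Ioc (dr / 2) dr) := by
    intro r hr; simp only [hg2def]; rw [h2 r hr.1 hr.2]
  have hg3eq : EqOn (fun r => u r * r) g3 (Ioc dr da) := by
    intro r hr; simp only [hg3def]; rw [h3 r hr.1 hr.2]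
  have hg0eq : EqOn (fun r => u r * r) 0 (Ioi da) := by
    intro r hr; simp [h4 r hr]
  have contg1 : Continuous g1 := by
    have he : g1 = fun r => -(Fr * dr / 2) * (r * Real.log r)
        + ((Fr * dr / 2) * (1 / 2 + Real.log (dr / 2)) - (2 / 3) * Fa * (da - dr)) * r := by
      funext r; simp only [hg1def]; ring
    rw [he]
    exact (continuous_const.mul Real.continuous_mul_log).add (continuous_const.mul continuous_id)
  have contg2 : Continuous g2 := by
    simp only [hg2def]; fun_prop
  have contg3 : Continuous g3 := by
    simp only [hg3def]; fun_prop
  -- integrability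
  have int1 : IntegrableOn (fun r => u r * r) (Ioc 0 (dr / 2)) :=
    (contg1.integrableOn_Ioc).congr_fun hg1eq.symm measurableSet_Ioc
  have int2 : IntegrableOn (fun r => u r * r) (Ioc (dr / 2) dr) :=
    (contg2.integrableOn_Ioc).congr_fun hg2eq.symm measurableSet_Ioc
  have int3 : IntegrableOn (fun r => u r * r) (Ioc dr da) :=
    (contg3.integrableOn_Ioc).congr_fun hg3eq.symm measurableSet_Ioc
  have int4 : IntegrableOn (fun r => u r * r) (Ioi da) :=
    (integrableOn_zero).congr_fun hg0eq.symm measurableSet_Ioi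
  -- split the integral
  have hu1 : Ioc (0:ℝ) (dr/2) ∪ Ioc (dr/2) dr = Ioc 0 dr := Ioc_union_Ioc_eq_Ioc hdr2.le (by linarith)
  have hu2 : Ioc (0:ℝ) dr ∪ Ioc dr da = Ioc 0 da := Ioc_union_Ioc_eq_Ioc hdr.le hdra.le
  have hu3 : Ioc (0:ℝ) da ∪ Ioi da = Ioi 0 := Ioc_union_Ioi_eq_Ioi hda.le
  have int12 : IntegrableOn (fun r => u r * r) (Ioc 0 dr) := by
    rw [← hu1]; exact int1.union int2
  have int123 : IntegrableOn (fun r => u r * r) (Ioc 0 da) := by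
    rw [← hu2]; exact int12.union int3
  have hsplit : ∫ r in Ioi (0:ℝ), u r * r
      = (((∫ r in Ioc (0:ℝ) (dr/2), u r * r) + ∫ r in Ioc (dr/2) dr, u r * r)
        + ∫ r in Ioc dr da, u r * r) + ∫ r in Ioi da, u r * r := by
    rw [← setIntegral_union (Ioc_disj 0 (dr/2) dr) measurableSet_Ioc int1 int2, hu1,
        ← setIntegral_union (Ioc_disj 0 dr da) measurableSet_Ioc int12 int3, hu2,
        ← setIntegral_union (Ioc_disjoint_Ioi le_rfl) measurableSet_Ioi int123 int4, hu3]
  -- piece 4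
  have p4 : ∫ r in Ioi da, u r * r = 0 := by
    rw [setIntegral_congr_fun measurableSet_Ioi hg0eq]
    simp
  -- piece 1
  have p1 : ∫ r in Ioc (0:ℝ) (dr/2), u r * r
      = -(Fr * dr / 2) * ((dr/2) ^ 2 / 2 * Real.log (dr/2) - (dr/2) ^ 2 / 4)
        + ((Fr * dr / 2) * (1 / 2 + Real.log (dr / 2)) - (2 / 3) * Fa * (da - dr)) * ((dr/2) ^ 2 / 2) := by
    rw [setIntegral_congr_fun measurableSet_Ioc hg1eq,
        ← intervalIntegral.integral_of_le hdr2.le]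
    have he : ∀ r : ℝ, g1 r = (-(Fr * dr / 2) * Real.log r
        + ((Fr * dr / 2) * (1 / 2 + Real.log (dr / 2)) - (2 / 3) * Fa * (da - dr))) * r := by
      intro r; simp only [hg1def]; ring
    rw [intervalIntegral.integral_congr (fun r _ => he r)]
    exact aux_log _ _ _ hdr2
  -- piece 2
  have p2 : ∫ r in Ioc (dr/2) dr, u r * r
      = (0 * dr ^ 5 + (Fr/(4*dr)) * dr ^ 4 + (-(2*Fr)/3) * dr ^ 3
          + ((Fr * dr - (2/3) * Fa * (da - dr))/2) * dr ^ 2)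
        - (0 * (dr/2) ^ 5 + (Fr/(4*dr)) * (dr/2) ^ 4 + (-(2*Fr)/3) * (dr/2) ^ 3
          + ((Fr * dr - (2/3) * Fa * (da - dr))/2) * (dr/2) ^ 2) := by
    rw [setIntegral_congr_fun measurableSet_Ioc hg2eq,
        ← intervalIntegral.integral_of_le (by linarith : dr/2 ≤ dr)]
    refine intervalIntegral.integral_eq_sub_of_hasDerivAt
      (f := fun r => 0 * r ^ 5 + (Fr/(4*dr)) * r ^ 4 + (-(2*Fr)/3) * r ^ 3
        + ((Fr * dr - (2/3) * Fa * (da - dr))/2) * r ^ 2) ?_ ?_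
    · intro x _
      have h := aux_poly5 0 (Fr/(4*dr)) (-(2*Fr)/3) ((Fr * dr - (2/3) * Fa * (da - dr))/2) x
      have he : g2 x = 5 * 0 * x ^ 4 + 4 * (Fr/(4*dr)) * x ^ 3 + 3 * (-(2*Fr)/3) * x ^ 2
          + 2 * ((Fr * dr - (2/3) * Fa * (da - dr))/2) * x := by
        simp only [hg2def]; field_simp; ring
      rw [he]; exact h
    · exact contg2.intervalIntegrable _ _
  -- piece 3
  have p3 : ∫ r in Ioc dr da, u r * r
      = ((-(2 * Fa / (3 * (da - dr) ^ 2)) * 2 / 5) * da ^ 5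
          + (-(2 * Fa / (3 * (da - dr) ^ 2)) * (-(3 * (da + dr))) / 4) * da ^ 4
          + (-(2 * Fa / (3 * (da - dr) ^ 2)) * (6 * da * dr) / 3) * da ^ 3
          + (-(2 * Fa / (3 * (da - dr) ^ 2)) * (-(da ^ 2 * (3 * dr - da))) / 2) * da ^ 2)
        - ((-(2 * Fa / (3 * (da - dr) ^ 2)) * 2 / 5) * dr ^ 5
          + (-(2 * Fa / (3 * (da - dr) ^ 2)) * (-(3 * (da + dr))) / 4) * dr ^ 4
          + (-(2 * Fa / (3 * (da - dr) ^ 2)) * (6 * da * dr) / 3) * dr ^ 3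
          + (-(2 * Fa / (3 * (da - dr) ^ 2)) * (-(da ^ 2 * (3 * dr - da))) / 2) * dr ^ 2) := by
    rw [setIntegral_congr_fun measurableSet_Ioc hg3eq,
        ← intervalIntegral.integral_of_le hdra.le]
    refine intervalIntegral.integral_eq_sub_of_hasDerivAt
      (f := fun r => (-(2 * Fa / (3 * (da - dr) ^ 2)) * 2 / 5) * r ^ 5
        + (-(2 * Fa / (3 * (da - dr) ^ 2)) * (-(3 * (da + dr))) / 4) * r ^ 4
        + (-(2 * Fa / (3 * (da - dr) ^ 2)) * (6 * da * dr) / 3) * r ^ 3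
        + (-(2 * Fa / (3 * (da - dr) ^ 2)) * (-(da ^ 2 * (3 * dr - da))) / 2) * r ^ 2) ?_ ?_
    · intro x _
      have h := aux_poly5 (-(2 * Fa / (3 * (da - dr) ^ 2)) * 2 / 5)
        (-(2 * Fa / (3 * (da - dr) ^ 2)) * (-(3 * (da + dr))) / 4)
        (-(2 * Fa / (3 * (da - dr) ^ 2)) * (6 * da * dr) / 3)
        (-(2 * Fa / (3 * (da - dr) ^ 2)) * (-(da ^ 2 * (3 * dr - da))) / 2) x
      have he : g3 x = 5 * (-(2 * Fa / (3 * (da - dr) ^ 2)) * 2 / 5) * x ^ 4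
          + 4 * (-(2 * Fa / (3 * (da - dr) ^ 2)) * (-(3 * (da + dr))) / 4) * x ^ 3
          + 3 * (-(2 * Fa / (3 * (da - dr) ^ 2)) * (6 * da * dr) / 3) * x ^ 2
          + 2 * (-(2 * Fa / (3 * (da - dr) ^ 2)) * (-(da ^ 2 * (3 * dr - da))) / 2) * x := by
        simp only [hg3def]; ring
      rw [he]; exact h
    · exact contg3.intervalIntegrable _ _
  -- the value of the integral
  have hI : ∫ r in Ioi (0:ℝ), u r * r
      = Fr * dr ^ 3 * 17 / 192
        - (Fa / 30) * (da - dr) * (3 * da ^ 2 + 4 * da * dr + 3 * dr ^ 2) := by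
    rw [hsplit, p1, p2, p3, p4]
    field_simp
    ring
  refine ⟨hI, ?_⟩
  rw [hI]
  have hQ : 0 < 3 * da ^ 2 + 4 * da * dr + 3 * dr ^ 2 := by nlinarith
  have h85 : 0 < 85 * dr ^ 3 := by positivity
  constructor
  · intro h
    rw [gt_iff_lt, div_lt_div_iff₀ h85 hFa]
    nlinarith [h]
  · intro h
    rw [gt_iff_lt, div_lt_div_iff₀ h85 hFa] at h
    nlinarith [h]
end
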